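/- Let g(x) = ‖x‖₂ on ℝ^n and ν > 0. Then ∂_B prox_{νg} is a strong linear Newton approximation of prox_{νg} at every x ∈ ℝ^n: for each x there exist constants C > 0 and δ > 0 such that for every y ∈ ℝ^n with ‖y − x‖₂ < δ and every V ∈ ∂_B prox_{νg}(y), one has ‖prox_{νg}(x) − prox_{νg}(y) − V(x − y)‖₂ ≤ C ‖x − y‖₂². -/

import Mathlib

set_option maxHeartbeats 1000000

open Filter Topology Set
open scoped RealInnerProductSpace

namespace Statement7Aux

variable {n : ℕ}

local notation "E" => EuclideanSpace ℝ (Fin n)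

/-- The closed-form block soft-thresholding map: `prox_{ν‖·‖}`. -/
noncomputable def sfun (ν : ℝ) (z : E) : E :=
  if ‖z‖ ≤ ν then 0 else (1 - ν / ‖z‖) • z

/-- The smooth extension used in the region `‖z‖ > ν`. -/
noncomputable def ffun (ν : ℝ) (z : E) : E := (1 - ν / ‖z‖) • z

/-- Candidate derivative of `ffun` at `u`. -/
noncomputable def Dmap (ν : ℝ) (u : E) : E →L[ℝ] E :=
  (1 - ν / ‖u‖) • ContinuousLinearMap.id ℝ (EuclideanSpace ℝ (Fin n))
    + (ν / ‖u‖ ^ 3) • ((innerSL ℝ u).smulRight u)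

lemma sfun_isMinOn (ν : ℝ) (hν : 0 < ν) (x z : E) :
    ν * ‖sfun ν x‖ + ‖sfun ν x - x‖ ^ 2 / 2 ≤ ν * ‖z‖ + ‖z - x‖ ^ 2 / 2 := by
  have hzx : ‖z - x‖ ^ 2 = ‖z‖ ^ 2 - 2 * ⟪z, x⟫ + ‖x‖ ^ 2 := norm_sub_sq_real z x
  have hcs : ⟪z, x⟫ ≤ ‖z‖ * ‖x‖ := real_inner_le_norm z x
  have hz0 : (0:ℝ) ≤ ‖z‖ := norm_nonneg z
  by_cases hx : ‖x‖ ≤ ν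
  · rw [sfun, if_pos hx]
    simp only [norm_zero, zero_sub, norm_neg, mul_zero, zero_add]
    nlinarith [mul_le_mul_of_nonneg_left hx hz0]
  · rw [sfun, if_neg hx]
    push_neg at hx
    have hb : (0:ℝ) < ‖x‖ := lt_trans hν hx
    have h1 : ‖(1 - ν / ‖x‖) • x‖ = ‖x‖ - ν := by
      rw [norm_smul, Real.norm_eq_abs, abs_of_nonneg (by
        rw [sub_nonneg, div_le_one hb]; exact hx.le)]
      field_simp
    have h2 : (1 - ν / ‖x‖) • x - x = (-(ν / ‖x‖)) • x := by module
    have h3 : ‖(1 - ν / ‖x‖) • x - x‖ = ν := by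
      rw [h2, norm_smul, Real.norm_eq_abs, abs_neg, abs_of_nonneg (by positivity)]
      field_simp
    rw [h1, h3, hzx]
    nlinarith [sq_nonneg (‖z‖ - ‖x‖ + ν)]

lemma prox_eq (ν : ℝ) (hν : 0 < ν) (prox : E → E)
    (hprox : ∀ x, IsMinOn (fun z : E => ν * ‖z‖ + ‖z - x‖ ^ 2 / 2) Set.univ (prox x))
    (x : E) : prox x = sfun ν x := by
  set p := prox x with hp
  set s := sfun ν x with hs
  have hmin := (hprox x)
  rw [isMinOn_iff] at hmin
  have h1 : ν * ‖p‖ + ‖p - x‖ ^ 2 / 2 ≤ ν * ‖s‖ + ‖s - x‖ ^ 2 / 2 :=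
    hmin s (mem_univ _)
  have h2 : ν * ‖s‖ + ‖s - x‖ ^ 2 / 2 ≤ ν * ‖p‖ + ‖p - x‖ ^ 2 / 2 :=
    sfun_isMinOn ν hν x p
  have h3 := hmin ((1/2 : ℝ) • (p + s)) (mem_univ _)
  have hw : (1/2 : ℝ) • (p + s) - x = (1/2 : ℝ) • ((p - x) + (s - x)) := by module
  have hpar : ‖(p - x) + (s - x)‖ ^ 2
      = 2 * ‖p - x‖ ^ 2 + 2 * ‖s - x‖ ^ 2 - ‖p - s‖ ^ 2 := by
    have h := parallelogram_law_with_norm ℝ (p - x) (s - x)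
    have h4 : (p - x) - (s - x) = p - s := by abel
    rw [h4] at h
    nlinarith [h]
  have hwx : ‖(1/2 : ℝ) • (p + s) - x‖ ^ 2
      = (2 * ‖p - x‖ ^ 2 + 2 * ‖s - x‖ ^ 2 - ‖p - s‖ ^ 2) / 4 := by
    rw [hw, norm_smul, mul_pow, ← hpar]
    simp only [Real.norm_eq_abs]
    rw [abs_of_pos (by norm_num : (0:ℝ) < 1/2)]
    ring
  have hwn : ‖(1/2 : ℝ) • (p + s)‖ ≤ (‖p‖ + ‖s‖) / 2 := by
    rw [norm_smul]
    have := norm_add_le p s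
    simp only [Real.norm_eq_abs]
    rw [abs_of_pos (by norm_num : (0:ℝ) < 1/2)]
    linarith
  have hwn' : ν * ‖(1/2 : ℝ) • (p + s)‖ ≤ ν * ((‖p‖ + ‖s‖) / 2) :=
    mul_le_mul_of_nonneg_left hwn hν.le
  have hps : ‖p - s‖ ^ 2 ≤ 0 := by
    rw [hwx] at h3
    linarith
  have : ‖p - s‖ = 0 := by nlinarith [norm_nonneg (p - s)]
  have := norm_eq_zero.mp this
  exact sub_eq_zero.mp this

lemma norm_sfun_le (ν : ℝ) (hν : 0 < ν) (z : E) : ‖sfun ν z‖ ≤ |‖z‖ - ν| := by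
  rw [sfun]
  by_cases h : ‖z‖ ≤ ν
  · rw [if_pos h]; simpa using abs_nonneg (‖z‖ - ν)
  · push_neg at h
    have hb : (0:ℝ) < ‖z‖ := lt_trans hν h
    rw [if_neg (not_le.mpr h), norm_smul, Real.norm_eq_abs,
      abs_of_nonneg (by rw [sub_nonneg, div_le_one hb]; exact h.le)]
    rw [abs_of_nonneg (by linarith)]
    field_simp
    norm_num

lemma sfun_continuousAt (ν : ℝ) (hν : 0 < ν) (y : E) : ContinuousAt (sfun ν) y := by
  rcases lt_trichotomy ‖y‖ ν with h | h | h
  · have hev : sfun ν =ᶠ[𝓝 y] (fun _ => (0 : E)) := by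
      filter_upwards [IsOpen.mem_nhds (isOpen_lt continuous_norm continuous_const)
        (by simpa using h)] with z hz
      rw [sfun, if_pos (le_of_lt hz)]
    exact (continuousAt_const).congr hev.symm
  · have h0 : sfun ν y = 0 := by rw [sfun, if_pos h.le]
    rw [ContinuousAt, h0]
    apply squeeze_zero_norm (fun z => norm_sfun_le ν hν z)
    have : ContinuousAt (fun z : E => |‖z‖ - ν|) y := by fun_prop
    rw [ContinuousAt] at this
    simpa [h] using this
  · have hev : sfun ν =ᶠ[𝓝 y] ffun ν := by
      filter_upwards [IsOpen.mem_nhds (isOpen_lt continuous_const continuous_norm)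
        (by simpa using h)] with z hz
      rw [sfun, if_neg (not_le.mpr hz), ffun]
    have hy0 : y ≠ 0 := by
      intro h0; rw [h0, norm_zero] at h; linarith
    have hyn : ‖y‖ ≠ 0 := norm_ne_zero_iff.mpr hy0
    have : ContinuousAt (ffun ν) y := by
      show ContinuousAt (fun z : E => (1 - ν / ‖z‖) • z) y
      apply ContinuousAt.smul (f := fun z : E => 1 - ν / ‖z‖) (g := id)
      · fun_prop (disch := assumption)
      · exact continuousAt_id
    exact this.congr hev.symm

lemma hasFDerivAt_norm' {u : E} (hu : u ≠ 0) :
    HasFDerivAt (fun z : E => ‖z‖) (‖u‖⁻¹ • innerSL ℝ u) u := by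
  have h0 : ‖u‖ ≠ 0 := norm_ne_zero_iff.mpr hu
  have h1 : HasFDerivAt (fun z : E => ‖z‖ ^ 2) (2 • innerSL ℝ u) u :=
    (hasStrictFDerivAt_norm_sq u).hasFDerivAt
  have h2 : HasDerivAt Real.sqrt (1 / (2 * Real.sqrt (‖u‖ ^ 2))) (‖u‖ ^ 2) :=
    Real.hasDerivAt_sqrt (by positivity)
  have h3 := h2.comp_hasFDerivAt u h1
  have h4 : (Real.sqrt ∘ fun z : E => ‖z‖ ^ 2) = fun z : E => ‖z‖ := by
    funext z; simp [Function.comp, Real.sqrt_sq (norm_nonneg z)]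
  rw [h4, Real.sqrt_sq (norm_nonneg u)] at h3
  have heq : (1 / (2 * ‖u‖)) • (2 • innerSL ℝ u) = ‖u‖⁻¹ • innerSL ℝ u := by
    rw [two_smul, smul_add, ← add_smul]
    congr 1
    rw [← add_div, show (1:ℝ)+1 = 2 from by norm_num]
    rw [div_eq_iff (by positivity : (2:ℝ) * ‖u‖ ≠ 0)]
    field_simp [h0]
  rw [heq] at h3
  exact h3

lemma hasFDerivAt_ffun (ν : ℝ) {u : E} (hu : u ≠ 0) :
    HasFDerivAt (ffun ν) (Dmap ν u) u := by
  have h0 : ‖u‖ ≠ 0 := norm_ne_zero_iff.mpr hu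
  have hn := hasFDerivAt_norm' hu
  have hinv : HasDerivAt Inv.inv (-(‖u‖ ^ 2)⁻¹) ‖u‖ := hasDerivAt_inv h0
  have h1 : HasFDerivAt (fun z : E => ‖z‖⁻¹)
      ((-(‖u‖ ^ 2)⁻¹) • (‖u‖⁻¹ • innerSL ℝ u)) u := by
    have := hinv.comp_hasFDerivAt u hn
    exact this
  have h2 : HasFDerivAt (fun z : E => 1 - ν / ‖z‖)
      (-(ν • ((-(‖u‖ ^ 2)⁻¹) • (‖u‖⁻¹ • innerSL ℝ u)))) u := by
    have := (h1.const_mul ν).const_sub 1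
    simpa [div_eq_mul_inv] using this
  have h3 := h2.smul (hasFDerivAt_id u)
  have : ffun ν = fun z : E => (1 - ν / ‖z‖) • z := rfl
  rw [this]
  refine h3.congr_fderiv ?_
  symm
  refine ContinuousLinearMap.ext fun h => ?_
  simp only [Dmap, ContinuousLinearMap.add_apply, ContinuousLinearMap.smul_apply,
    ContinuousLinearMap.coe_id', id_eq, ContinuousLinearMap.smulRight_apply,
    innerSL_apply_apply, ContinuousLinearMap.coe_smul', Pi.smul_apply, smul_eq_mul,
    ContinuousLinearMap.neg_apply, neg_smul, neg_neg, smul_smul]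
  match_scalars <;> (field_simp [h0]; try ring) <;> tauto

lemma key (ν : ℝ) (hν : 0 < ν) {u x : E} (ha : ν ≤ ‖u‖) (hb : ν ≤ ‖x‖) :
    ‖ffun ν x - ffun ν u - Dmap ν u (x - u)‖ ≤ (4 / ν) * ‖x - u‖ ^ 2 := by
  have ha0 : 0 < ‖u‖ := lt_of_lt_of_le hν ha
  have hb0 : 0 < ‖x‖ := lt_of_lt_of_le hν hb
  set a := ‖u‖ with hadef
  set b := ‖x‖ with hbdef
  set e := x - u with he
  set t := (⟪u, e⟫ : ℝ) with ht
  set E2 := ‖e‖ with hE2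
  have hE20 : 0 ≤ E2 := norm_nonneg e
  have hxue : x = u + e := by rw [he]; abel
  have hb2 : b ^ 2 = a ^ 2 + 2 * t + E2 ^ 2 := by
    rw [hbdef, hxue, norm_add_sq_real]
  have ht1 : |t| ≤ a * E2 := abs_real_inner_le_norm u e
  have hba : |b - a| ≤ E2 := by
    rw [hbdef, hadef, hE2, he, abs_sub_comm]
    exact abs_norm_sub_norm_le u x |>.trans_eq (by rw [← norm_neg]; congr 1; abel)
  -- the exact identity
  have hid : ffun ν x - ffun ν u - Dmap ν u e
      = (ν / a - ν / b - ν * t / a ^ 3) • u + (ν / a - ν / b) • e := by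
    simp only [ffun, Dmap, ContinuousLinearMap.add_apply, ContinuousLinearMap.smul_apply,
      ContinuousLinearMap.coe_id', id_eq, ContinuousLinearMap.smulRight_apply, innerSL_apply_apply,
      smul_eq_mul, ← ht, ← hadef, ← hbdef]
    rw [hxue]
    match_scalars <;> ring
  set c1 := ν / a - ν / b - ν * t / a ^ 3 with hc1def
  set c2 := ν / a - ν / b with hc2def
  set M := a ^ 2 * (b - a) - t * b with hM
  have hc1 : c1 = ν * M / (a ^ 3 * b) := by
    rw [eq_div_iff (by positivity : a ^ 3 * b ≠ 0), hc1def, hc2def, hM]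
    field_simp
  have hc2 : c2 = ν * (b - a) / (a * b) := by
    rw [eq_div_iff (by positivity : a * b ≠ 0), hc2def]
    field_simp
  have hMid : M * (a + b) = -(t * (b - a) * (2 * a + b)) + a ^ 2 * E2 ^ 2 := by
    rw [hM]; linear_combination a ^ 2 * hb2
  have hMabs : |M| ≤ 3 * a * E2 ^ 2 := by
    have h1 : |M * (a + b)| ≤ a * E2 * E2 * (2 * a + b) + a ^ 2 * E2 ^ 2 := by
      rw [hMid]
      refine (abs_add_le _ _).trans ?_
      rw [abs_neg, abs_mul, abs_mul]
      have h2a : |2 * a + b| = 2 * a + b := abs_of_pos (by linarith)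
      rw [h2a, abs_of_nonneg (by positivity : (0:ℝ) ≤ a ^ 2 * E2 ^ 2)]
      have hmm : |t| * |b - a| ≤ (a * E2) * E2 :=
        mul_le_mul ht1 hba (abs_nonneg _) (by positivity)
      have := mul_le_mul_of_nonneg_right hmm (by linarith : (0:ℝ) ≤ 2 * a + b)
      linarith
    have h2 : |M| * (a + b) ≤ a * E2 ^ 2 * (3 * a + b) := by
      rw [← abs_of_pos (by linarith : (0:ℝ) < a + b), ← abs_mul]
      exact h1.trans (le_of_eq (by ring))
    have h3 : |M| * (a + b) ≤ (3 * a * E2 ^ 2) * (a + b) := by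
      nlinarith [mul_pos ha0 hb0, sq_nonneg E2, mul_nonneg (mul_nonneg ha0.le (sq_nonneg E2)) hb0.le]
    exact le_of_mul_le_mul_right h3 (by linarith)
  have hnn : ν * ν ≤ a * b := mul_le_mul ha hb hν.le (by linarith)
  have hc1a : |c1| * a ≤ 3 * E2 ^ 2 / ν := by
    have hd : (0:ℝ) < a ^ 3 * b := by positivity
    calc |c1| * a = ν * |M| / (a ^ 2 * b) := by
          rw [hc1, abs_div, abs_mul, abs_of_pos hν, abs_of_pos hd, div_mul_eq_mul_div,
            div_eq_div_iff hd.ne' (by positivity : (a:ℝ) ^ 2 * b ≠ 0)]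
          ring
      _ ≤ ν * (3 * a * E2 ^ 2) / (a ^ 2 * b) := by gcongr
      _ = 3 * E2 ^ 2 * ν / (a * b) := by
          rw [div_eq_div_iff (by positivity : (a:ℝ) ^ 2 * b ≠ 0) (by positivity : (a:ℝ) * b ≠ 0)]
          ring
      _ ≤ 3 * E2 ^ 2 * ν / (ν * ν) := by gcongr
      _ = 3 * E2 ^ 2 / ν := by
          rw [div_eq_div_iff (by positivity : (ν:ℝ) * ν ≠ 0) hν.ne']
          ring
  have hc2e : |c2| * E2 ≤ E2 ^ 2 / ν := by
    calc |c2| * E2 = ν * |b - a| / (a * b) * E2 := by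
          rw [hc2, abs_div, abs_mul, abs_of_pos hν, abs_of_pos (by positivity : (0:ℝ) < a * b)]
      _ ≤ ν * E2 / (ν * ν) * E2 := by gcongr
      _ = E2 ^ 2 / ν := by
          rw [div_mul_eq_mul_div, div_eq_div_iff (by positivity : (ν:ℝ) * ν ≠ 0) hν.ne']
          ring
  calc ‖ffun ν x - ffun ν u - Dmap ν u e‖ = ‖c1 • u + c2 • e‖ := by rw [hid]
    _ ≤ ‖c1 • u‖ + ‖c2 • e‖ := norm_add_le _ _
    _ = |c1| * a + |c2| * E2 := by rw [norm_smul, norm_smul, Real.norm_eq_abs, Real.norm_eq_abs]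
    _ ≤ 3 * E2 ^ 2 / ν + E2 ^ 2 / ν := add_le_add hc1a hc2e
    _ = (4 / ν) * E2 ^ 2 := by ring

lemma sfun_eq_ffun (ν : ℝ) (hν : 0 < ν) {z : E} (hz : ν ≤ ‖z‖) : sfun ν z = ffun ν z := by
  rcases eq_or_lt_of_le hz with h | h
  · rw [sfun, if_pos h.ge, ffun, ← h, div_self hν.ne', sub_self, zero_smul]
  · rw [sfun, if_neg (not_le.mpr h), ffun]

lemma hasFDerivAt_sfun_outer (ν : ℝ) (hν : 0 < ν) {u : E} (hu : ν < ‖u‖) :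
    HasFDerivAt (sfun ν) (Dmap ν u) u := by
  have hu0 : u ≠ 0 := by
    intro h0; rw [h0, norm_zero] at hu; linarith
  apply (hasFDerivAt_ffun ν hu0).congr_of_eventuallyEq
  filter_upwards [IsOpen.mem_nhds (isOpen_lt continuous_const continuous_norm)
    (by simpa using hu)] with z hz
  rw [sfun, if_neg (not_le.mpr hz), ffun]

lemma hasFDerivAt_sfun_inner (ν : ℝ) {u : E} (hu : ‖u‖ < ν) :
    HasFDerivAt (sfun ν) (0 : E →L[ℝ] E) u := by
  apply (hasFDerivAt_const (0 : E) u).congr_of_eventuallyEq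
  filter_upwards [IsOpen.mem_nhds (isOpen_lt continuous_norm continuous_const)
    (by simpa using hu)] with z hz
  rw [sfun, if_pos (le_of_lt hz)]

lemma sfun_not_differentiableAt (ν : ℝ) (hν : 0 < ν) {u : E} (hu : ‖u‖ = ν) :
    ¬ DifferentiableAt ℝ (sfun ν) u := by
  intro h
  have hu0 : u ≠ 0 := by
    intro h0; rw [h0, norm_zero] at hu; exact hν.ne' hu.symm
  have hc : DifferentiableAt ℝ (fun t : ℝ => (1 + t) • u) 0 := by
    apply DifferentiableAt.smul_const
    fun_prop
  have hline : DifferentiableAt ℝ (fun t : ℝ => sfun ν ((1 + t) • u)) 0 := by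
    have h' : DifferentiableAt ℝ (sfun ν) ((fun t : ℝ => (1 + t) • u) 0) := by
      simpa using h
    exact h'.comp 0 hc
  have heq : (fun t : ℝ => sfun ν ((1 + t) • u)) =ᶠ[nhds (0:ℝ)] fun t => max t 0 • u := by
    filter_upwards [Ioo_mem_nhds (by norm_num : (-1:ℝ) < 0) (by norm_num : (0:ℝ) < 1)] with t ht
    obtain ⟨ht1, ht2⟩ := ht
    have h1t : (0:ℝ) < 1 + t := by linarith
    have hnorm : ‖(1 + t) • u‖ = (1 + t) * ν := by
      rw [norm_smul, Real.norm_eq_abs, abs_of_pos h1t, hu]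
    by_cases hts : t ≤ 0
    · rw [sfun, if_pos (by rw [hnorm]; nlinarith), max_eq_right hts, zero_smul]
    · push_neg at hts
      rw [sfun, if_neg (by rw [hnorm]; push_neg; nlinarith), max_eq_left hts.le, hnorm,
        smul_smul]
      congr 1
      field_simp
      ring
  have hmax : DifferentiableAt ℝ (fun t : ℝ => max t 0 • u) 0 :=
    hline.congr_of_eventuallyEq heq.symm
  have hinner : DifferentiableAt ℝ (fun t : ℝ => (⟪u, max t 0 • u⟫ : ℝ)) 0 :=
    ((innerSL ℝ u).differentiableAt).comp 0 hmax
  have h2 : DifferentiableAt ℝ (fun t : ℝ => max t 0 * ν ^ 2) 0 := by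
    have hfe : (fun t : ℝ => (⟪u, max t 0 • u⟫ : ℝ)) = fun t : ℝ => max t 0 * ν ^ 2 := by
      funext t
      rw [real_inner_smul_right, real_inner_self_eq_norm_sq, hu]
    rwa [hfe] at hinner
  have h3 : DifferentiableAt ℝ (fun t : ℝ => max t 0) 0 := by
    have h4 := h2.const_mul ((ν ^ 2)⁻¹)
    have hne : (ν:ℝ) ^ 2 ≠ 0 := by positivity
    have hfe : (fun t : ℝ => (ν ^ 2)⁻¹ * (max t 0 * ν ^ 2)) = fun t : ℝ => max t 0 := by
      funext t; field_simp
    rwa [hfe] at h4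
  have h4 : DifferentiableAt ℝ (fun t : ℝ => |t|) 0 := by
    have h5 := (h3.const_mul 2).fun_sub differentiableAt_fun_id
    have hfe : (fun t : ℝ => 2 * max t 0 - t) = fun t : ℝ => |t| := by
      funext t
      rcases le_or_gt t 0 with h | h
      · rw [max_eq_right h, abs_of_nonpos h]; ring
      · rw [max_eq_left h.le, abs_of_pos h]; ring
    rwa [hfe] at h5
  exact not_differentiableAt_abs_zero h4

lemma pointwise (ν : ℝ) (hν : 0 < ν) (x : E) :
    ∃ δ > (0:ℝ), ∀ u : E, ‖u - x‖ < δ → DifferentiableAt ℝ (sfun ν) u →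
      ‖sfun ν x - sfun ν u - fderiv ℝ (sfun ν) u (x - u)‖ ≤ (4 / ν) * ‖x - u‖ ^ 2 := by
  have hzero : ∀ u : E, ‖u‖ < ν → ‖x‖ ≤ ν →
      ‖sfun ν x - sfun ν u - fderiv ℝ (sfun ν) u (x - u)‖ ≤ (4 / ν) * ‖x - u‖ ^ 2 := by
    intro u hu hx
    have hsx : sfun ν x = 0 := by rw [sfun, if_pos hx]
    have hsu : sfun ν u = 0 := by rw [sfun, if_pos hu.le]
    rw [(hasFDerivAt_sfun_inner ν hu).fderiv, hsx, hsu]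
    simp only [sub_zero, sub_self, ContinuousLinearMap.zero_apply, norm_zero]
    positivity
  have houter : ∀ u : E, ν < ‖u‖ → ν ≤ ‖x‖ →
      ‖sfun ν x - sfun ν u - fderiv ℝ (sfun ν) u (x - u)‖ ≤ (4 / ν) * ‖x - u‖ ^ 2 := by
    intro u hu hx
    rw [(hasFDerivAt_sfun_outer ν hν hu).fderiv, sfun_eq_ffun ν hν hx,
      sfun_eq_ffun ν hν hu.le]
    exact key ν hν hu.le hx
  rcases lt_trichotomy ‖x‖ ν with hx | hx | hx
  · refine ⟨ν - ‖x‖, by linarith, fun u hu _ => ?_⟩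
    have hun : ‖u‖ < ν := by
      have := norm_sub_norm_le u x
      linarith
    exact hzero u hun hx.le
  · refine ⟨1, one_pos, fun u _ hdiff => ?_⟩
    rcases lt_trichotomy ‖u‖ ν with hun | hun | hun
    · exact hzero u hun hx.le
    · exact absurd hdiff (sfun_not_differentiableAt ν hν hun)
    · exact houter u hun hx.ge
  · refine ⟨‖x‖ - ν, by linarith, fun u hu _ => ?_⟩
    have hun : ν < ‖u‖ := by
      have := norm_sub_norm_le x u
      rw [norm_sub_rev] at this
      linarith
    exact houter u hun hx.le

end Statement7Aux

open Filter Topology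

/-- The B-subdifferential of a map `F : ℝ^n → ℝ^n` at `x`: the set of limits of
derivatives `∇F(x^(k))` along sequences `x^(k) → x` of differentiability points of `F`. -/
def Bsubdiff {n : ℕ} (F : EuclideanSpace ℝ (Fin n) → EuclideanSpace ℝ (Fin n))
    (x : EuclideanSpace ℝ (Fin n)) :
    Set (EuclideanSpace ℝ (Fin n) →L[ℝ] EuclideanSpace ℝ (Fin n)) :=
  {V | ∃ u : ℕ → EuclideanSpace ℝ (Fin n),
      Filter.Tendsto u Filter.atTop (nhds x) ∧
      (∀ k, DifferentiableAt ℝ F (u k)) ∧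
      Filter.Tendsto (fun k => fderiv ℝ F (u k)) Filter.atTop (nhds V)}

/-- For `g = ‖·‖₂` and `ν > 0`, `∂_B prox_{νg}` is a strong linear Newton
approximation of `prox_{νg}` at every `x`: there exist `C > 0` and `δ > 0` such that for
every `y` with `‖y − x‖ < δ` and every `V ∈ ∂_B prox_{νg}(y)`,
`‖prox_{νg}(x) − prox_{νg}(y) − V(x − y)‖ ≤ C ‖x − y‖²`. -/
theorem statement7 {n : ℕ} (ν : ℝ) (hν : 0 < ν)
    (prox : EuclideanSpace ℝ (Fin n) → EuclideanSpace ℝ (Fin n))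
    (hprox : ∀ x, IsMinOn
      (fun z : EuclideanSpace ℝ (Fin n) => ν * ‖z‖ + ‖z - x‖ ^ 2 / 2)
      Set.univ (prox x))
    (x : EuclideanSpace ℝ (Fin n)) :
    ∃ C > (0 : ℝ), ∃ δ > (0 : ℝ), ∀ y : EuclideanSpace ℝ (Fin n), ‖y - x‖ < δ →
      ∀ V ∈ Bsubdiff prox y, ‖prox x - prox y - V (x - y)‖ ≤ C * ‖x - y‖ ^ 2 := by
  have hfun : prox = Statement7Aux.sfun ν :=
    funext (Statement7Aux.prox_eq ν hν prox hprox)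
  subst hfun
  obtain ⟨δ, hδ, hpt⟩ := Statement7Aux.pointwise ν hν x
  refine ⟨4 / ν, by positivity, δ, hδ, ?_⟩
  intro y hy V hV
  obtain ⟨u, hu_t, hu_d, hu_f⟩ := hV
  have hev : ∀ᶠ k in Filter.atTop, ‖u k - x‖ < δ := by
    have ht : Filter.Tendsto (fun k => ‖u k - x‖) Filter.atTop (nhds ‖y - x‖) :=
      (hu_t.sub tendsto_const_nhds).norm
    exact ht.eventually_lt_const hy
  have hle : ∀ᶠ k in Filter.atTop,
      ‖Statement7Aux.sfun ν x - Statement7Aux.sfun ν (u k) -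
          fderiv ℝ (Statement7Aux.sfun ν) (u k) (x - u k)‖ ≤ (4 / ν) * ‖x - u k‖ ^ 2 := by
    filter_upwards [hev] with k hk using hpt (u k) hk (hu_d k)
  have h1 : Filter.Tendsto (fun k => Statement7Aux.sfun ν (u k)) Filter.atTop
      (nhds (Statement7Aux.sfun ν y)) :=
    ((Statement7Aux.sfun_continuousAt ν hν y).tendsto).comp hu_t
  have h2 : Filter.Tendsto (fun k => fderiv ℝ (Statement7Aux.sfun ν) (u k) (x - u k))
      Filter.atTop (nhds (V (x - y))) := by
    have hv : Filter.Tendsto (fun k => x - u k) Filter.atTop (nhds (x - y)) :=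
      tendsto_const_nhds.sub hu_t
    have hba : Continuous fun p :
        ((EuclideanSpace ℝ (Fin n) →L[ℝ] EuclideanSpace ℝ (Fin n)) ×
          EuclideanSpace ℝ (Fin n)) => p.1 p.2 :=
      isBoundedBilinearMap_apply.continuous
    exact (hba.tendsto (V, x - y)).comp (hu_f.prodMk_nhds hv)
  have hL : Filter.Tendsto
      (fun k => ‖Statement7Aux.sfun ν x - Statement7Aux.sfun ν (u k) -
        fderiv ℝ (Statement7Aux.sfun ν) (u k) (x - u k)‖) Filter.atTop
      (nhds ‖Statement7Aux.sfun ν x - Statement7Aux.sfun ν y - V (x - y)‖) :=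
    ((tendsto_const_nhds.sub h1).sub h2).norm
  have hR : Filter.Tendsto (fun k => (4 / ν) * ‖x - u k‖ ^ 2) Filter.atTop
      (nhds ((4 / ν) * ‖x - y‖ ^ 2)) := by
    have ht : Filter.Tendsto (fun k => ‖x - u k‖) Filter.atTop (nhds ‖x - y‖) :=
      (tendsto_const_nhds.sub hu_t).norm
    exact (ht.pow 2).const_mul _
  exact le_of_tendsto_of_tendsto hL hR hle
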